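/- The cardinality of the closure cl(φ) is at most |φ|, and every formula in cl(φ) has size at most |φ|². -/
import Mathlib


mutual
inductive Fml : Type where
  | var : ℕ → Fml
  | neg : Fml → Fml
  | and : Fml → Fml → Fml
  | or : Fml → Fml → Fml
  | dia : Prog → Fml → Fml
  | box : Prog → Fml → Fml
  deriving DecidableEq
inductive Prog : Type where
  | atom : ℕ → Prog
  | conv : ℕ → Prog
  | seq : Prog → Prog → Prog
  | choice : Prog → Prog → Prog
  | star : Prog → Prog
  | test : Fml → Prog
  deriving DecidableEq
end

structure Model (W : Type) where
  R : ℕ → W → W → Prop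
  V : ℕ → W → Prop

mutual
def Sat {W : Type} (M : Model W) : W → Fml → Prop
  | w, .var p => M.V p w
  | w, .neg φ => ¬ Sat M w φ
  | w, .and φ ψ => Sat M w φ ∧ Sat M w ψ
  | w, .or φ ψ => Sat M w φ ∨ Sat M w ψ
  | w, .dia γ φ => ∃ v, PRel M γ w v ∧ Sat M v φ
  | w, .box γ φ => ∀ v, PRel M γ w v → Sat M v φ
def PRel {W : Type} (M : Model W) : Prog → W → W → Prop
  | .atom a, w, v => M.R a w v
  | .conv a, w, v => M.R a v w
  | .seq γ δ, w, v => ∃ u, PRel M γ w u ∧ PRel M δ u v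
  | .choice γ δ, w, v => PRel M γ w v ∨ PRel M δ w v
  | .star γ, w, v => Relation.ReflTransGen (fun a b => PRel M γ a b) w v
  | .test φ, w, v => w = v ∧ Sat M w φ
end
mutual
def IsNNF : Fml → Prop
  | .var _ => True
  | .neg (.var _) => True
  | .neg _ => False
  | .and φ ψ => IsNNF φ ∧ IsNNF ψ
  | .or φ ψ => IsNNF φ ∧ IsNNF ψ
  | .dia γ φ => IsNNFP γ ∧ IsNNF φ
  | .box γ φ => IsNNFP γ ∧ IsNNF φ
def IsNNFP : Prog → Prop
  | .atom _ => True
  | .conv _ => True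
  | .seq γ δ => IsNNFP γ ∧ IsNNFP δ
  | .choice γ δ => IsNNFP γ ∧ IsNNFP δ
  | .star γ => IsNNFP γ
  | .test φ => IsNNF φ
end

mutual
/-- `nnf φ` is the negation normal form of `φ`. -/
def nnf : Fml → Fml
  | .var p => .var p
  | .neg φ => nnfNeg φ
  | .and φ ψ => .and (nnf φ) (nnf ψ)
  | .or φ ψ => .or (nnf φ) (nnf ψ)
  | .dia γ φ => .dia γ (nnf φ)
  | .box γ φ => .box γ (nnf φ)
/-- `nnfNeg φ = nnf (¬ φ)`, written `∼φ`. -/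
def nnfNeg : Fml → Fml
  | .var p => .neg (.var p)
  | .neg φ => nnf φ
  | .and φ ψ => .or (nnfNeg φ) (nnfNeg ψ)
  | .or φ ψ => .and (nnfNeg φ) (nnfNeg ψ)
  | .dia γ φ => .box γ (nnfNeg φ)
  | .box γ φ => .dia γ (nnfNeg φ)
end

/-- Literal programs: atomic programs or converses of atomic programs. -/
inductive Lit : Type where
  | atom : ℕ → Lit
  | conv : ℕ → Lit
  deriving DecidableEq

def Lit.toProg : Lit → Prog
  | .atom a => .atom a
  | .conv a => .conv a

/-- The converse `l⁻` of a literal program. -/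
def Lit.inv : Lit → Lit
  | .atom a => .conv a
  | .conv a => .atom a

/-- The reduction relation `⤳` on ⟨·⟩-formulae. -/
inductive Red : Fml → Fml → Prop where
  | seq (γ δ χ) : Red (.dia (.seq γ δ) χ) (.dia γ (.dia δ χ))
  | choiceL (γ δ χ) : Red (.dia (.choice γ δ) χ) (.dia γ χ)
  | choiceR (γ δ χ) : Red (.dia (.choice γ δ) χ) (.dia δ χ)
  | star1 (γ χ) : Red (.dia (.star γ) χ) χ
  | star2 (γ χ) : Red (.dia (.star γ) χ) (.dia γ (.dia (.star γ) χ))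
  | test (ϕ χ) : Red (.dia (.test ϕ) χ) χ

/-- `InPre ψ φ` means `φ ∈ pre(ψ)`, i.e. `φ = ⟨γ₁⟩…⟨γ_k⟩ψ`. -/
inductive InPre (ψ : Fml) : Fml → Prop where
  | base : InPre ψ ψ
  | step (γ φ) : InPre ψ φ → InPre ψ (.dia γ φ)

/-- `φ` is an eventuality: `φ = ⟨γ₁⟩…⟨γ_k⟩⟨γ*⟩ψ`. -/
def IsEv (φ : Fml) : Prop := ∃ γ ψ, InPre (.dia (.star γ) ψ) φ

mutual
/-- Size of formulas. -/
def fsize : Fml → ℕ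
  | .var _ => 1
  | .neg (.var _) => 1
  | .neg φ => 1 + fsize φ
  | .and φ ψ => 1 + fsize φ + fsize ψ
  | .or φ ψ => 1 + fsize φ + fsize ψ
  | .dia γ φ => psize γ + fsize φ
  | .box γ φ => psize γ + fsize φ
/-- Size of programs. -/
def psize : Prog → ℕ
  | .atom _ => 1
  | .conv _ => 1
  | .seq γ δ => 1 + psize γ + psize δ
  | .choice γ δ => 1 + psize γ + psize δ
  | .star γ => 1 + psize γ
  | .test φ => 1 + fsize φ
end
/-- One decomposition step generating the closure `cl(φ)`. -/
inductive ClStep : Fml → Fml → Prop where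
  | diaLit (l : Lit) (ψ) : ClStep (.dia l.toProg ψ) ψ
  | boxLit (l : Lit) (ψ) : ClStep (.box l.toProg ψ) ψ
  | andL (φ ψ) : ClStep (.and φ ψ) φ
  | andR (φ ψ) : ClStep (.and φ ψ) ψ
  | orL (φ ψ) : ClStep (.or φ ψ) φ
  | orR (φ ψ) : ClStep (.or φ ψ) ψ
  | boxChoiceL (γ δ φ) : ClStep (.box (.choice γ δ) φ) (.box γ φ)
  | boxChoiceR (γ δ φ) : ClStep (.box (.choice γ δ) φ) (.box δ φ)
  | boxStar1 (γ φ) : ClStep (.box (.star γ) φ) φ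
  | boxStar2 (γ φ) : ClStep (.box (.star γ) φ) (.box γ (.box (.star γ) φ))
  | diaTest1 (ψ φ) : ClStep (.dia (.test ψ) φ) φ
  | diaTest2 (ψ φ) : ClStep (.dia (.test ψ) φ) ψ
  | diaSeq (γ δ φ) : ClStep (.dia (.seq γ δ) φ) (.dia γ (.dia δ φ))
  | boxSeq (γ δ φ) : ClStep (.box (.seq γ δ) φ) (.box γ (.box δ φ))
  | diaChoiceL (γ δ φ) : ClStep (.dia (.choice γ δ) φ) (.dia γ φ)
  | diaChoiceR (γ δ φ) : ClStep (.dia (.choice γ δ) φ) (.dia δ φ)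
  | diaStar1 (γ φ) : ClStep (.dia (.star γ) φ) φ
  | diaStar2 (γ φ) : ClStep (.dia (.star γ) φ) (.dia γ (.dia (.star γ) φ))
  | boxTest1 (ψ φ) : ClStep (.box (.test ψ) φ) φ
  | boxTest2 (ψ φ) : ClStep (.box (.test ψ) φ) (nnfNeg ψ)

/-- The closure `cl(φ)`: the least set containing `φ` and closed under `ClStep`. -/
def Cl (φ : Fml) : Set Fml := {ψ | Relation.ReflTransGen ClStep φ ψ}

/-- A single step of a (model) chain: a literal-program diamond is instantiated,
otherwise a `⤳`-reduction happens at the same world. -/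
def ChainStep {W : Type} (M : Model W) : (W × Fml) → (W × Fml) → Prop
  | (w, .dia (.atom a) χ), (w', χ') => χ' = χ ∧ M.R a w w'
  | (w, .dia (.conv a) χ), (w', χ') => χ' = χ ∧ M.R a w' w
  | (w, χ), (w', χ') => Red χ χ' ∧ w' = w

/-- `σ` is a model chain for `(M, w, φ, ψ)`. -/
def ModelChain {W : Type} (M : Model W) (w : W) (φ ψ : Fml) (σ : List (W × Fml)) : Prop :=
  ∃ h : σ ≠ [], σ.head h = (w, φ) ∧ (σ.getLast h).2 = ψ ∧
    (∀ p ∈ σ, Sat M p.1 p.2) ∧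
    ∀ i, (h1 : i + 1 < σ.length) →
      ChainStep M (σ.get ⟨i, by omega⟩) (σ.get ⟨i + 1, h1⟩)

open Classical in
/-- `ex φ`: the largest non-eventuality `ψ` with `φ ∈ pre(ψ)`. -/
noncomputable def ex : Fml → Fml
  | .dia γ ψ => if IsEv (.dia γ ψ) then ex ψ else .dia γ ψ
  | φ => φ

mutual
/-- `SubF χ φ`: `χ` is a subformula of the formula `φ`. -/
inductive SubF : Fml → Fml → Prop where
  | refl (φ) : SubF φ φ
  | neg {χ φ} : SubF χ φ → SubF χ (.neg φ)
  | andL {χ φ ψ} : SubF χ φ → SubF χ (.and φ ψ)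
  | andR {χ φ ψ} : SubF χ ψ → SubF χ (.and φ ψ)
  | orL {χ φ ψ} : SubF χ φ → SubF χ (.or φ ψ)
  | orR {χ φ ψ} : SubF χ ψ → SubF χ (.or φ ψ)
  | diaF {χ γ φ} : SubF χ φ → SubF χ (.dia γ φ)
  | diaP {χ γ φ} : SubP χ γ → SubF χ (.dia γ φ)
  | boxF {χ γ φ} : SubF χ φ → SubF χ (.box γ φ)
  | boxP {χ γ φ} : SubP χ γ → SubF χ (.box γ φ)
/-- `SubP χ γ`: `χ` is a subformula of the program `γ`. -/
inductive SubP : Fml → Prog → Prop where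
  | seqL {χ γ δ} : SubP χ γ → SubP χ (.seq γ δ)
  | seqR {χ γ δ} : SubP χ δ → SubP χ (.seq γ δ)
  | choiceL {χ γ δ} : SubP χ γ → SubP χ (.choice γ δ)
  | choiceR {χ γ δ} : SubP χ δ → SubP χ (.choice γ δ)
  | star {χ γ} : SubP χ γ → SubP χ (.star γ)
  | test {χ φ} : SubF χ φ → SubP χ (.test φ)
end
/-- `ann` is an annotation for `Γ`: it maps some eventualities `φ ∈ Γ`
to a formula `ann φ ∈ Γ` with `φ ⤳ ann φ`. -/
def IsAnnotation (Γ : Set Fml) (ann : Fml → Option Fml) : Prop :=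
  ∀ φ φ', ann φ = some φ' → φ ∈ Γ ∧ IsEv φ ∧ φ' ∈ Γ ∧ Red φ φ'

/-- `ann` is full on `Γ`: it is defined on all eventualities of `Γ`. -/
def FullAnn (Γ : Set Fml) (ann : Fml → Option Fml) : Prop :=
  ∀ φ ∈ Γ, IsEv φ → (ann φ).isSome

/-- `ann` is non-cyclic: there is no cycle `φ₀, …, φ_n` with `ann φ_i = φ_{i+1 mod n+1}`. -/
def NonCyclic (ann : Fml → Option Fml) : Prop :=
  ¬ ∃ (n : ℕ) (f : ℕ → Fml), (∀ i < n, ann (f i) = some (f (i + 1))) ∧ ann (f n) = some (f 0)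

/-- One step of iterating an annotation (identity where undefined). -/
def annStep (ann : Fml → Option Fml) (φ : Fml) : Fml := (ann φ).getD φ

/-- The pure-formula version of a chain step:
if `χ = ⟨l⟩χ₀` for a literal program `l` then `χ' = χ₀`, else `χ ⤳ χ'`. -/
def FStep : Fml → Fml → Prop
  | .dia (.atom _) χ, χ' => χ' = χ
  | .dia (.conv _) χ, χ' => χ' = χ
  | χ, χ' => Red χ χ'

mutual
/-- The atomic program `d` occurs in a formula. -/
def OccursF (d : ℕ) : Fml → Prop
  | .var _ => False
  | .neg φ => OccursF d φ
  | .and φ ψ => OccursF d φ ∨ OccursF d ψ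
  | .or φ ψ => OccursF d φ ∨ OccursF d ψ
  | .dia γ φ => OccursP d γ ∨ OccursF d φ
  | .box γ φ => OccursP d γ ∨ OccursF d φ
/-- The atomic program `d` occurs in a program (as `d` or `d⁻`). -/
def OccursP (d : ℕ) : Prog → Prop
  | .atom a => a = d
  | .conv a => a = d
  | .seq γ δ => OccursP d γ ∨ OccursP d δ
  | .choice γ δ => OccursP d γ ∨ OccursP d δ
  | .star γ => OccursP d γ
  | .test φ => OccursF d φ
end

/-- `(M, w, chn)` annotated-satisfies `(Γ, ann)`. -/
def AnnSat {W : Type} (M : Model W) (w : W)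
    (chn : Fml → Option (List (W × Fml))) (Γ : Set Fml) (ann : Fml → Option Fml) : Prop :=
  (∀ ψ ∈ Γ, Sat M w ψ) ∧
  (∀ ψ ∈ Γ, IsEv ψ → (chn ψ).isSome) ∧
  (∀ ψ σ, IsEv ψ → chn ψ = some σ →
    ModelChain M w ψ (ex ψ) σ ∧
    (∀ i, (h : i < σ.length) → ∀ χ, σ.get ⟨i, h⟩ = (w, χ) → IsEv χ → chn χ = some (σ.drop i)) ∧
    (∀ ψ', ann ψ = some ψ' → ∃ h : 1 < σ.length, σ.get ⟨1, h⟩ = (w, ψ')))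

section ClosureAux

theorem psize_pos : ∀ γ : Prog, 1 ≤ psize γ := by
  intro γ; cases γ <;> simp only [psize] <;> omega

theorem fsize_pos : ∀ φ : Fml, 1 ≤ fsize φ := by
  intro φ
  cases φ with
  | var p => simp [fsize]
  | neg ψ => cases ψ <;> simp only [fsize] <;> omega
  | and φ ψ => simp only [fsize]; omega
  | or φ ψ => simp only [fsize]; omega
  | dia γ ψ => have := psize_pos γ; simp only [fsize]; omega
  | box γ ψ => have := psize_pos γ; simp only [fsize]; omega

mutual
theorem fsize_nnf_le : ∀ φ : Fml, fsize (nnf φ) ≤ fsize φ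
  | .var p => by simp [nnf]
  | .neg φ => by
      have h := fsize_nnfNeg_le φ
      cases φ <;> simp only [nnf, fsize] at * <;> omega
  | .and φ ψ => by
      have h1 := fsize_nnf_le φ; have h2 := fsize_nnf_le ψ
      simp only [nnf, fsize]; omega
  | .or φ ψ => by
      have h1 := fsize_nnf_le φ; have h2 := fsize_nnf_le ψ
      simp only [nnf, fsize]; omega
  | .dia γ φ => by
      have h := fsize_nnf_le φ; simp only [nnf, fsize]; omega
  | .box γ φ => by
      have h := fsize_nnf_le φ; simp only [nnf, fsize]; omega
theorem fsize_nnfNeg_le : ∀ φ : Fml, fsize (nnfNeg φ) ≤ fsize φ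
  | .var p => by simp [nnfNeg, fsize]
  | .neg φ => by
      have h := fsize_nnf_le φ
      cases φ <;> simp only [nnfNeg, fsize] at * <;> omega
  | .and φ ψ => by
      have h1 := fsize_nnfNeg_le φ; have h2 := fsize_nnfNeg_le ψ
      simp only [nnfNeg, fsize]; omega
  | .or φ ψ => by
      have h1 := fsize_nnfNeg_le φ; have h2 := fsize_nnfNeg_le ψ
      simp only [nnfNeg, fsize]; omega
  | .dia γ φ => by
      have h := fsize_nnfNeg_le φ; simp only [nnfNeg, fsize]; omega
  | .box γ φ => by
      have h := fsize_nnfNeg_le φ; simp only [nnfNeg, fsize]; omega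
end

mutual
/-- Syntactic closure as a finset. -/
def clF : Fml → Finset Fml
  | .var p => {.var p}
  | .neg φ => {.neg φ}
  | .and φ ψ => insert (.and φ ψ) (clF φ ∪ clF ψ)
  | .or φ ψ => insert (.or φ ψ) (clF φ ∪ clF ψ)
  | .dia γ φ => DF γ φ ∪ clF φ
  | .box γ φ => BF γ φ ∪ clF φ
  termination_by φ => fsize φ
  decreasing_by
    all_goals simp only [fsize, psize]
    all_goals (try omega)
    all_goals (have := fsize_pos φ; have := psize_pos γ; omega)
/-- Diamond part of the closure, with opaque continuation `χ`. -/
def DF : Prog → Fml → Finset Fml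
  | .atom a, χ => {.dia (.atom a) χ}
  | .conv a, χ => {.dia (.conv a) χ}
  | .seq γ δ, χ => insert (.dia (.seq γ δ) χ) (DF γ (.dia δ χ) ∪ DF δ χ)
  | .choice γ δ, χ => insert (.dia (.choice γ δ) χ) (DF γ χ ∪ DF δ χ)
  | .star γ, χ => insert (.dia (.star γ) χ) (DF γ (.dia (.star γ) χ))
  | .test ψ, χ => insert (.dia (.test ψ) χ) (clF ψ)
  termination_by γ _ => psize γ
  decreasing_by
    all_goals simp only [fsize, psize] <;> omega
/-- Box part of the closure, with opaque continuation `χ`. -/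
def BF : Prog → Fml → Finset Fml
  | .atom a, χ => {.box (.atom a) χ}
  | .conv a, χ => {.box (.conv a) χ}
  | .seq γ δ, χ => insert (.box (.seq γ δ) χ) (BF γ (.box δ χ) ∪ BF δ χ)
  | .choice γ δ, χ => insert (.box (.choice γ δ) χ) (BF γ χ ∪ BF δ χ)
  | .star γ, χ => insert (.box (.star γ) χ) (BF γ (.box (.star γ) χ))
  | .test ψ, χ => insert (.box (.test ψ) χ) (clF (nnfNeg ψ))
  termination_by γ _ => psize γ
  decreasing_by
    all_goals simp only [fsize, psize]
    all_goals (try omega)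
    all_goals (have := fsize_nnfNeg_le ψ; omega)
end


mutual
theorem card_clF : ∀ φ : Fml, (clF φ).card ≤ fsize φ
  | .var p => by simp [clF, fsize]
  | .neg φ => by simpa [clF] using fsize_pos (.neg φ)
  | .and φ ψ => by
      have h1 := card_clF φ; have h2 := card_clF ψ
      have h3 := Finset.card_insert_le (Fml.and φ ψ) (clF φ ∪ clF ψ)
      have h4 := Finset.card_union_le (clF φ) (clF ψ)
      simp only [clF, fsize]; omega
  | .or φ ψ => by
      have h1 := card_clF φ; have h2 := card_clF ψ
      have h3 := Finset.card_insert_le (Fml.or φ ψ) (clF φ ∪ clF ψ)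
      have h4 := Finset.card_union_le (clF φ) (clF ψ)
      simp only [clF, fsize]; omega
  | .dia γ φ => by
      have h1 := card_DF γ φ; have h2 := card_clF φ
      have h4 := Finset.card_union_le (DF γ φ) (clF φ)
      simp only [clF, fsize]; omega
  | .box γ φ => by
      have h1 := card_BF γ φ; have h2 := card_clF φ
      have h4 := Finset.card_union_le (BF γ φ) (clF φ)
      simp only [clF, fsize]; omega
  termination_by φ => fsize φ
  decreasing_by
    all_goals simp only [fsize, psize]
    all_goals (try omega)
    all_goals (have := fsize_pos φ; have := psize_pos γ; omega)
theorem card_DF : ∀ (γ : Prog) (χ : Fml), (DF γ χ).card ≤ psize γ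
  | .atom a, χ => by simp [DF, psize]
  | .conv a, χ => by simp [DF, psize]
  | .seq γ δ, χ => by
      have h1 := card_DF γ (.dia δ χ); have h2 := card_DF δ χ
      have h3 := Finset.card_insert_le (Fml.dia (.seq γ δ) χ) (DF γ (.dia δ χ) ∪ DF δ χ)
      have h4 := Finset.card_union_le (DF γ (.dia δ χ)) (DF δ χ)
      simp only [DF, psize]; omega
  | .choice γ δ, χ => by
      have h1 := card_DF γ χ; have h2 := card_DF δ χ
      have h3 := Finset.card_insert_le (Fml.dia (.choice γ δ) χ) (DF γ χ ∪ DF δ χ)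
      have h4 := Finset.card_union_le (DF γ χ) (DF δ χ)
      simp only [DF, psize]; omega
  | .star γ, χ => by
      have h1 := card_DF γ (.dia (.star γ) χ)
      have h3 := Finset.card_insert_le (Fml.dia (.star γ) χ) (DF γ (.dia (.star γ) χ))
      simp only [DF, psize]; omega
  | .test ψ, χ => by
      have h1 := card_clF ψ
      have h3 := Finset.card_insert_le (Fml.dia (.test ψ) χ) (clF ψ)
      simp only [DF, psize]; omega
  termination_by γ _ => psize γ
  decreasing_by
    all_goals simp only [fsize, psize]
    all_goals (try omega)
    all_goals omega
theorem card_BF : ∀ (γ : Prog) (χ : Fml), (BF γ χ).card ≤ psize γ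
  | .atom a, χ => by simp [BF, psize]
  | .conv a, χ => by simp [BF, psize]
  | .seq γ δ, χ => by
      have h1 := card_BF γ (.box δ χ); have h2 := card_BF δ χ
      have h3 := Finset.card_insert_le (Fml.box (.seq γ δ) χ) (BF γ (.box δ χ) ∪ BF δ χ)
      have h4 := Finset.card_union_le (BF γ (.box δ χ)) (BF δ χ)
      simp only [BF, psize]; omega
  | .choice γ δ, χ => by
      have h1 := card_BF γ χ; have h2 := card_BF δ χ
      have h3 := Finset.card_insert_le (Fml.box (.choice γ δ) χ) (BF γ χ ∪ BF δ χ)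
      have h4 := Finset.card_union_le (BF γ χ) (BF δ χ)
      simp only [BF, psize]; omega
  | .star γ, χ => by
      have h1 := card_BF γ (.box (.star γ) χ)
      have h3 := Finset.card_insert_le (Fml.box (.star γ) χ) (BF γ (.box (.star γ) χ))
      simp only [BF, psize]; omega
  | .test ψ, χ => by
      have h1 := card_clF (nnfNeg ψ)
      have h2 := fsize_nnfNeg_le ψ
      have h3 := Finset.card_insert_le (Fml.box (.test ψ) χ) (clF (nnfNeg ψ))
      simp only [BF, psize]; omega
  termination_by γ _ => psize γ
  decreasing_by
    all_goals simp only [fsize, psize]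
    all_goals (try omega)
    all_goals (have := fsize_nnfNeg_le ψ; omega)
end
mutual
theorem size_clF : ∀ (φ ψ : Fml), ψ ∈ clF φ → fsize ψ ≤ fsize φ ^ 2
  | .var p, ψ => by
      intro h; simp only [clF, Finset.mem_singleton] at h; subst h
      simp [fsize]
  | .neg φ, ψ => by
      intro h; simp only [clF, Finset.mem_singleton] at h; subst h
      have := fsize_pos (Fml.neg φ); nlinarith
  | .and φ₁ φ₂, ψ => by
      intro h; simp only [clF, Finset.mem_insert, Finset.mem_union] at h
      have p1 := fsize_pos φ₁; have p2 := fsize_pos φ₂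
      rcases h with rfl | h | h
      · have := fsize_pos (Fml.and φ₁ φ₂); nlinarith
      · have := size_clF φ₁ ψ h; simp only [fsize]; nlinarith
      · have := size_clF φ₂ ψ h; simp only [fsize]; nlinarith
  | .or φ₁ φ₂, ψ => by
      intro h; simp only [clF, Finset.mem_insert, Finset.mem_union] at h
      have p1 := fsize_pos φ₁; have p2 := fsize_pos φ₂
      rcases h with rfl | h | h
      · have := fsize_pos (Fml.or φ₁ φ₂); nlinarith
      · have := size_clF φ₁ ψ h; simp only [fsize]; nlinarith
      · have := size_clF φ₂ ψ h; simp only [fsize]; nlinarith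
  | .dia γ φ, ψ => by
      intro h; simp only [clF, Finset.mem_union] at h
      have p1 := fsize_pos φ; have p2 := psize_pos γ
      rcases h with h | h
      · have := size_DF γ φ ψ h; simp only [fsize]; nlinarith
      · have := size_clF φ ψ h; simp only [fsize]; nlinarith
  | .box γ φ, ψ => by
      intro h; simp only [clF, Finset.mem_union] at h
      have p1 := fsize_pos φ; have p2 := psize_pos γ
      rcases h with h | h
      · have := size_BF γ φ ψ h; simp only [fsize]; nlinarith
      · have := size_clF φ ψ h; simp only [fsize]; nlinarith
  termination_by φ _ => fsize φ
  decreasing_by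
    all_goals simp only [fsize, psize]
    all_goals (try omega)
    all_goals (have := fsize_pos φ; have := psize_pos γ; omega)
theorem size_DF : ∀ (γ : Prog) (χ ψ : Fml), ψ ∈ DF γ χ → fsize ψ ≤ psize γ ^ 2 + fsize χ
  | .atom a, χ, ψ => by
      intro h; simp only [DF, Finset.mem_singleton] at h; subst h
      simp [fsize, psize]
  | .conv a, χ, ψ => by
      intro h; simp only [DF, Finset.mem_singleton] at h; subst h
      simp [fsize, psize]
  | .seq γ δ, χ, ψ => by
      intro h; simp only [DF, Finset.mem_insert, Finset.mem_union] at h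
      have p1 := psize_pos γ; have p2 := psize_pos δ
      rcases h with rfl | h | h
      · simp only [fsize, psize]; nlinarith
      · have := size_DF γ (.dia δ χ) ψ h
        simp only [fsize, psize] at *; nlinarith
      · have := size_DF δ χ ψ h; simp only [psize]; nlinarith
  | .choice γ δ, χ, ψ => by
      intro h; simp only [DF, Finset.mem_insert, Finset.mem_union] at h
      have p1 := psize_pos γ; have p2 := psize_pos δ
      rcases h with rfl | h | h
      · simp only [fsize, psize]; nlinarith
      · have := size_DF γ χ ψ h; simp only [psize]; nlinarith
      · have := size_DF δ χ ψ h; simp only [psize]; nlinarith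
  | .star γ, χ, ψ => by
      intro h; simp only [DF, Finset.mem_insert] at h
      have p1 := psize_pos γ
      rcases h with rfl | h
      · simp only [fsize, psize]; nlinarith
      · have := size_DF γ (.dia (.star γ) χ) ψ h
        simp only [fsize, psize] at *; nlinarith
  | .test χ₀, χ, ψ => by
      intro h; simp only [DF, Finset.mem_insert] at h
      have p1 := fsize_pos χ₀
      rcases h with rfl | h
      · simp only [fsize, psize]; nlinarith
      · have := size_clF χ₀ ψ h; simp only [psize]; nlinarith
  termination_by γ _ _ => psize γ
  decreasing_by
    all_goals simp only [fsize, psize]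
    all_goals omega
theorem size_BF : ∀ (γ : Prog) (χ ψ : Fml), ψ ∈ BF γ χ → fsize ψ ≤ psize γ ^ 2 + fsize χ
  | .atom a, χ, ψ => by
      intro h; simp only [BF, Finset.mem_singleton] at h; subst h
      simp [fsize, psize]
  | .conv a, χ, ψ => by
      intro h; simp only [BF, Finset.mem_singleton] at h; subst h
      simp [fsize, psize]
  | .seq γ δ, χ, ψ => by
      intro h; simp only [BF, Finset.mem_insert, Finset.mem_union] at h
      have p1 := psize_pos γ; have p2 := psize_pos δ
      rcases h with rfl | h | h
      · simp only [fsize, psize]; nlinarith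
      · have := size_BF γ (.box δ χ) ψ h
        simp only [fsize, psize] at *; nlinarith
      · have := size_BF δ χ ψ h; simp only [psize]; nlinarith
  | .choice γ δ, χ, ψ => by
      intro h; simp only [BF, Finset.mem_insert, Finset.mem_union] at h
      have p1 := psize_pos γ; have p2 := psize_pos δ
      rcases h with rfl | h | h
      · simp only [fsize, psize]; nlinarith
      · have := size_BF γ χ ψ h; simp only [psize]; nlinarith
      · have := size_BF δ χ ψ h; simp only [psize]; nlinarith
  | .star γ, χ, ψ => by
      intro h; simp only [BF, Finset.mem_insert] at h
      have p1 := psize_pos γ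
      rcases h with rfl | h
      · simp only [fsize, psize]; nlinarith
      · have := size_BF γ (.box (.star γ) χ) ψ h
        simp only [fsize, psize] at *; nlinarith
  | .test χ₀, χ, ψ => by
      intro h; simp only [BF, Finset.mem_insert] at h
      have p1 := fsize_pos χ₀; have p2 := fsize_nnfNeg_le χ₀
      rcases h with rfl | h
      · simp only [fsize, psize]; nlinarith
      · have := size_clF (nnfNeg χ₀) ψ h; simp only [psize]; nlinarith
  termination_by γ _ _ => psize γ
  decreasing_by
    all_goals simp only [fsize, psize]
    all_goals (try omega)
    all_goals (have := fsize_nnfNeg_le χ₀; omega)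
end
theorem mem_DF_self : ∀ (γ : Prog) (χ : Fml), Fml.dia γ χ ∈ DF γ χ := by
  intro γ χ; cases γ <;> simp [DF]

theorem mem_BF_self : ∀ (γ : Prog) (χ : Fml), Fml.box γ χ ∈ BF γ χ := by
  intro γ χ; cases γ <;> simp [BF]

theorem mem_clF_self : ∀ φ : Fml, φ ∈ clF φ := by
  intro φ
  cases φ with
  | var p => simp [clF]
  | neg ψ => simp [clF]
  | and φ ψ => simp [clF]
  | or φ ψ => simp [clF]
  | dia γ ψ => simp only [clF, Finset.mem_union]; exact Or.inl (mem_DF_self γ ψ)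
  | box γ ψ => simp only [clF, Finset.mem_union]; exact Or.inl (mem_BF_self γ ψ)

theorem clstep_cases {ψ χ : Fml} (h : ClStep ψ χ) :
    (∃ l χ₀, ψ = Fml.dia (Lit.toProg l) χ₀ ∧ χ = χ₀) ∨
    (∃ l χ₀, ψ = Fml.box (Lit.toProg l) χ₀ ∧ χ = χ₀) ∨
    (∃ φ₁ φ₂, ψ = .and φ₁ φ₂ ∧ (χ = φ₁ ∨ χ = φ₂)) ∨
    (∃ φ₁ φ₂, ψ = .or φ₁ φ₂ ∧ (χ = φ₁ ∨ χ = φ₂)) ∨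
    (∃ γ δ χ₀, ψ = .dia (.seq γ δ) χ₀ ∧ χ = .dia γ (.dia δ χ₀)) ∨
    (∃ γ δ χ₀, ψ = .box (.seq γ δ) χ₀ ∧ χ = .box γ (.box δ χ₀)) ∨
    (∃ γ δ χ₀, ψ = .dia (.choice γ δ) χ₀ ∧ (χ = .dia γ χ₀ ∨ χ = .dia δ χ₀)) ∨
    (∃ γ δ χ₀, ψ = .box (.choice γ δ) χ₀ ∧ (χ = .box γ χ₀ ∨ χ = .box δ χ₀)) ∨
    (∃ γ χ₀, ψ = .dia (.star γ) χ₀ ∧ (χ = χ₀ ∨ χ = .dia γ (.dia (.star γ) χ₀))) ∨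
    (∃ γ χ₀, ψ = .box (.star γ) χ₀ ∧ (χ = χ₀ ∨ χ = .box γ (.box (.star γ) χ₀))) ∨
    (∃ ψ₀ χ₀, ψ = .dia (.test ψ₀) χ₀ ∧ (χ = χ₀ ∨ χ = ψ₀)) ∨
    (∃ ψ₀ χ₀, ψ = .box (.test ψ₀) χ₀ ∧ (χ = χ₀ ∨ χ = nnfNeg ψ₀)) := by
  cases h <;> aesop

theorem clstep_var {p χ} (h : ClStep (.var p) χ) : False := by
  rcases clstep_cases h with h|h|h|h|h|h|h|h|h|h|h|h <;>
    first
      | (obtain ⟨l, χ₁, he, h2⟩ := h; cases l <;> simp_all [Lit.toProg])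
      | (obtain ⟨x, y, he, h2⟩ := h; simp_all)
      | (obtain ⟨x, y, z, he, h2⟩ := h; simp_all)
theorem clstep_neg {φ χ} (h : ClStep (.neg φ) χ) : False := by
  rcases clstep_cases h with h|h|h|h|h|h|h|h|h|h|h|h <;>
    first
      | (obtain ⟨l, χ₁, he, h2⟩ := h; cases l <;> simp_all [Lit.toProg])
      | (obtain ⟨x, y, he, h2⟩ := h; simp_all)
      | (obtain ⟨x, y, z, he, h2⟩ := h; simp_all)
theorem clstep_and {φ ψ χ} (h : ClStep (.and φ ψ) χ) : χ = φ ∨ χ = ψ := by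
  rcases clstep_cases h with h|h|h|h|h|h|h|h|h|h|h|h <;>
    first
      | (obtain ⟨l, χ₁, he, h2⟩ := h; cases l <;> simp_all [Lit.toProg])
      | (obtain ⟨x, y, he, h2⟩ := h; simp_all)
      | (obtain ⟨x, y, z, he, h2⟩ := h; simp_all)
theorem clstep_or {φ ψ χ} (h : ClStep (.or φ ψ) χ) : χ = φ ∨ χ = ψ := by
  rcases clstep_cases h with h|h|h|h|h|h|h|h|h|h|h|h <;>
    first
      | (obtain ⟨l, χ₁, he, h2⟩ := h; cases l <;> simp_all [Lit.toProg])
      | (obtain ⟨x, y, he, h2⟩ := h; simp_all)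
      | (obtain ⟨x, y, z, he, h2⟩ := h; simp_all)
theorem clstep_dia_atom {a χ₀ χ} (h : ClStep (.dia (.atom a) χ₀) χ) : χ = χ₀ := by
  rcases clstep_cases h with h|h|h|h|h|h|h|h|h|h|h|h <;>
    first
      | (obtain ⟨l, χ₁, he, h2⟩ := h; cases l <;> simp_all [Lit.toProg])
      | (obtain ⟨x, y, he, h2⟩ := h; simp_all)
      | (obtain ⟨x, y, z, he, h2⟩ := h; simp_all)
theorem clstep_dia_conv {a χ₀ χ} (h : ClStep (.dia (.conv a) χ₀) χ) : χ = χ₀ := by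
  rcases clstep_cases h with h|h|h|h|h|h|h|h|h|h|h|h <;>
    first
      | (obtain ⟨l, χ₁, he, h2⟩ := h; cases l <;> simp_all [Lit.toProg])
      | (obtain ⟨x, y, he, h2⟩ := h; simp_all)
      | (obtain ⟨x, y, z, he, h2⟩ := h; simp_all)
theorem clstep_box_atom {a χ₀ χ} (h : ClStep (.box (.atom a) χ₀) χ) : χ = χ₀ := by
  rcases clstep_cases h with h|h|h|h|h|h|h|h|h|h|h|h <;>
    first
      | (obtain ⟨l, χ₁, he, h2⟩ := h; cases l <;> simp_all [Lit.toProg])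
      | (obtain ⟨x, y, he, h2⟩ := h; simp_all)
      | (obtain ⟨x, y, z, he, h2⟩ := h; simp_all)
theorem clstep_box_conv {a χ₀ χ} (h : ClStep (.box (.conv a) χ₀) χ) : χ = χ₀ := by
  rcases clstep_cases h with h|h|h|h|h|h|h|h|h|h|h|h <;>
    first
      | (obtain ⟨l, χ₁, he, h2⟩ := h; cases l <;> simp_all [Lit.toProg])
      | (obtain ⟨x, y, he, h2⟩ := h; simp_all)
      | (obtain ⟨x, y, z, he, h2⟩ := h; simp_all)
theorem clstep_dia_seq {γ δ χ₀ χ} (h : ClStep (.dia (.seq γ δ) χ₀) χ) :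
    χ = .dia γ (.dia δ χ₀) := by
  rcases clstep_cases h with h|h|h|h|h|h|h|h|h|h|h|h <;>
    first
      | (obtain ⟨l, χ₁, he, h2⟩ := h; cases l <;> simp_all [Lit.toProg])
      | (obtain ⟨x, y, he, h2⟩ := h; simp_all)
      | (obtain ⟨x, y, z, he, h2⟩ := h; simp_all)
theorem clstep_box_seq {γ δ χ₀ χ} (h : ClStep (.box (.seq γ δ) χ₀) χ) :
    χ = .box γ (.box δ χ₀) := by
  rcases clstep_cases h with h|h|h|h|h|h|h|h|h|h|h|h <;>
    first
      | (obtain ⟨l, χ₁, he, h2⟩ := h; cases l <;> simp_all [Lit.toProg])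
      | (obtain ⟨x, y, he, h2⟩ := h; simp_all)
      | (obtain ⟨x, y, z, he, h2⟩ := h; simp_all)
theorem clstep_dia_choice {γ δ χ₀ χ} (h : ClStep (.dia (.choice γ δ) χ₀) χ) :
    χ = .dia γ χ₀ ∨ χ = .dia δ χ₀ := by
  rcases clstep_cases h with h|h|h|h|h|h|h|h|h|h|h|h <;>
    first
      | (obtain ⟨l, χ₁, he, h2⟩ := h; cases l <;> simp_all [Lit.toProg])
      | (obtain ⟨x, y, he, h2⟩ := h; simp_all)
      | (obtain ⟨x, y, z, he, h2⟩ := h; simp_all)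
theorem clstep_box_choice {γ δ χ₀ χ} (h : ClStep (.box (.choice γ δ) χ₀) χ) :
    χ = .box γ χ₀ ∨ χ = .box δ χ₀ := by
  rcases clstep_cases h with h|h|h|h|h|h|h|h|h|h|h|h <;>
    first
      | (obtain ⟨l, χ₁, he, h2⟩ := h; cases l <;> simp_all [Lit.toProg])
      | (obtain ⟨x, y, he, h2⟩ := h; simp_all)
      | (obtain ⟨x, y, z, he, h2⟩ := h; simp_all)
theorem clstep_dia_star {γ χ₀ χ} (h : ClStep (.dia (.star γ) χ₀) χ) :
    χ = χ₀ ∨ χ = .dia γ (.dia (.star γ) χ₀) := by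
  rcases clstep_cases h with h|h|h|h|h|h|h|h|h|h|h|h <;>
    first
      | (obtain ⟨l, χ₁, he, h2⟩ := h; cases l <;> simp_all [Lit.toProg])
      | (obtain ⟨x, y, he, h2⟩ := h; simp_all)
      | (obtain ⟨x, y, z, he, h2⟩ := h; simp_all)
theorem clstep_box_star {γ χ₀ χ} (h : ClStep (.box (.star γ) χ₀) χ) :
    χ = χ₀ ∨ χ = .box γ (.box (.star γ) χ₀) := by
  rcases clstep_cases h with h|h|h|h|h|h|h|h|h|h|h|h <;>
    first
      | (obtain ⟨l, χ₁, he, h2⟩ := h; cases l <;> simp_all [Lit.toProg])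
      | (obtain ⟨x, y, he, h2⟩ := h; simp_all)
      | (obtain ⟨x, y, z, he, h2⟩ := h; simp_all)
theorem clstep_dia_test {ψ₀ χ₀ χ} (h : ClStep (.dia (.test ψ₀) χ₀) χ) :
    χ = χ₀ ∨ χ = ψ₀ := by
  rcases clstep_cases h with h|h|h|h|h|h|h|h|h|h|h|h <;>
    first
      | (obtain ⟨l, χ₁, he, h2⟩ := h; cases l <;> simp_all [Lit.toProg])
      | (obtain ⟨x, y, he, h2⟩ := h; simp_all)
      | (obtain ⟨x, y, z, he, h2⟩ := h; simp_all)
theorem clstep_box_test {ψ₀ χ₀ χ} (h : ClStep (.box (.test ψ₀) χ₀) χ) :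
    χ = χ₀ ∨ χ = nnfNeg ψ₀ := by
  rcases clstep_cases h with h|h|h|h|h|h|h|h|h|h|h|h <;>
    first
      | (obtain ⟨l, χ₁, he, h2⟩ := h; cases l <;> simp_all [Lit.toProg])
      | (obtain ⟨x, y, he, h2⟩ := h; simp_all)
      | (obtain ⟨x, y, z, he, h2⟩ := h; simp_all)
mutual
theorem closed_clF : ∀ (φ ψ : Fml), ψ ∈ clF φ → ∀ χ, ClStep ψ χ → χ ∈ clF φ
  | .var p, ψ => by
      intro h χ hs
      simp only [clF, Finset.mem_singleton] at h; subst h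
      exact (clstep_var hs).elim
  | .neg φ, ψ => by
      intro h χ hs
      simp only [clF, Finset.mem_singleton] at h; subst h
      exact (clstep_neg hs).elim
  | .and φ₁ φ₂, ψ => by
      intro h χ hs
      simp only [clF, Finset.mem_insert, Finset.mem_union] at h
      simp only [clF, Finset.mem_insert, Finset.mem_union]
      rcases h with rfl | h | h
      · rcases clstep_and hs with rfl | rfl
        · exact Or.inr (Or.inl (mem_clF_self _))
        · exact Or.inr (Or.inr (mem_clF_self _))
      · exact Or.inr (Or.inl (closed_clF φ₁ ψ h χ hs))
      · exact Or.inr (Or.inr (closed_clF φ₂ ψ h χ hs))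
  | .or φ₁ φ₂, ψ => by
      intro h χ hs
      simp only [clF, Finset.mem_insert, Finset.mem_union] at h
      simp only [clF, Finset.mem_insert, Finset.mem_union]
      rcases h with rfl | h | h
      · rcases clstep_or hs with rfl | rfl
        · exact Or.inr (Or.inl (mem_clF_self _))
        · exact Or.inr (Or.inr (mem_clF_self _))
      · exact Or.inr (Or.inl (closed_clF φ₁ ψ h χ hs))
      · exact Or.inr (Or.inr (closed_clF φ₂ ψ h χ hs))
  | .dia γ φ, ψ => by
      intro h χ hs
      simp only [clF, Finset.mem_union] at h
      simp only [clF]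
      rcases h with h | h
      · exact closed_DF γ φ ψ h χ hs
      · exact Finset.mem_union_right _ (closed_clF φ ψ h χ hs)
  | .box γ φ, ψ => by
      intro h χ hs
      simp only [clF, Finset.mem_union] at h
      simp only [clF]
      rcases h with h | h
      · exact closed_BF γ φ ψ h χ hs
      · exact Finset.mem_union_right _ (closed_clF φ ψ h χ hs)
  termination_by φ _ => fsize φ
  decreasing_by
    all_goals simp only [fsize]
    all_goals (try omega)
    all_goals (have := fsize_pos φ; have := psize_pos γ; omega)
theorem closed_DF : ∀ (γ : Prog) (χ₀ ψ : Fml), ψ ∈ DF γ χ₀ → ∀ χ, ClStep ψ χ →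
    χ ∈ DF γ χ₀ ∪ clF χ₀
  | .atom a, χ₀, ψ => by
      intro h χ hs
      simp only [DF, Finset.mem_singleton] at h; subst h
      rcases clstep_dia_atom hs with rfl
      exact Finset.mem_union_right _ (mem_clF_self _)
  | .conv a, χ₀, ψ => by
      intro h χ hs
      simp only [DF, Finset.mem_singleton] at h; subst h
      rcases clstep_dia_conv hs with rfl
      exact Finset.mem_union_right _ (mem_clF_self _)
  | .seq γ δ, χ₀, ψ => by
      intro h χ hs
      simp only [DF, Finset.mem_insert, Finset.mem_union] at h
      rcases h with rfl | h | h
      · rcases clstep_dia_seq hs with rfl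
        refine Finset.mem_union_left _ ?_
        simp only [DF]
        exact Finset.mem_insert_of_mem (Finset.mem_union_left _ (mem_DF_self _ _))
      · have h2 := closed_DF γ (.dia δ χ₀) ψ h χ hs
        rcases Finset.mem_union.1 h2 with h3 | h3
        · refine Finset.mem_union_left _ ?_
          simp only [DF]
          exact Finset.mem_insert_of_mem (Finset.mem_union_left _ h3)
        · simp only [clF] at h3
          rcases Finset.mem_union.1 h3 with h4 | h4
          · refine Finset.mem_union_left _ ?_
            simp only [DF]
            exact Finset.mem_insert_of_mem (Finset.mem_union_right _ h4)
          · exact Finset.mem_union_right _ h4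
      · have h2 := closed_DF δ χ₀ ψ h χ hs
        rcases Finset.mem_union.1 h2 with h3 | h3
        · refine Finset.mem_union_left _ ?_
          simp only [DF]
          exact Finset.mem_insert_of_mem (Finset.mem_union_right _ h3)
        · exact Finset.mem_union_right _ h3
  | .choice γ δ, χ₀, ψ => by
      intro h χ hs
      simp only [DF, Finset.mem_insert, Finset.mem_union] at h
      rcases h with rfl | h | h
      · rcases clstep_dia_choice hs with rfl | rfl
        · refine Finset.mem_union_left _ ?_
          simp only [DF]
          exact Finset.mem_insert_of_mem (Finset.mem_union_left _ (mem_DF_self _ _))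
        · refine Finset.mem_union_left _ ?_
          simp only [DF]
          exact Finset.mem_insert_of_mem (Finset.mem_union_right _ (mem_DF_self _ _))
      · have h2 := closed_DF γ χ₀ ψ h χ hs
        rcases Finset.mem_union.1 h2 with h3 | h3
        · refine Finset.mem_union_left _ ?_
          simp only [DF]
          exact Finset.mem_insert_of_mem (Finset.mem_union_left _ h3)
        · exact Finset.mem_union_right _ h3
      · have h2 := closed_DF δ χ₀ ψ h χ hs
        rcases Finset.mem_union.1 h2 with h3 | h3
        · refine Finset.mem_union_left _ ?_
          simp only [DF]
          exact Finset.mem_insert_of_mem (Finset.mem_union_right _ h3)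
        · exact Finset.mem_union_right _ h3
  | .star γ, χ₀, ψ => by
      intro h χ hs
      simp only [DF, Finset.mem_insert] at h
      rcases h with rfl | h
      · rcases clstep_dia_star hs with rfl | rfl
        · exact Finset.mem_union_right _ (mem_clF_self _)
        · refine Finset.mem_union_left _ ?_
          simp only [DF]
          exact Finset.mem_insert_of_mem (mem_DF_self _ _)
      · have h2 := closed_DF γ (.dia (.star γ) χ₀) ψ h χ hs
        rcases Finset.mem_union.1 h2 with h3 | h3
        · refine Finset.mem_union_left _ ?_
          simp only [DF]
          exact Finset.mem_insert_of_mem h3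
        · simp only [clF] at h3
          exact h3
  | .test ψ₀, χ₀, ψ => by
      intro h χ hs
      simp only [DF, Finset.mem_insert] at h
      rcases h with rfl | h
      · rcases clstep_dia_test hs with rfl | rfl
        · exact Finset.mem_union_right _ (mem_clF_self _)
        · refine Finset.mem_union_left _ ?_
          simp only [DF]
          exact Finset.mem_insert_of_mem (mem_clF_self _)
      · have h2 := closed_clF ψ₀ ψ h χ hs
        refine Finset.mem_union_left _ ?_
        simp only [DF]
        exact Finset.mem_insert_of_mem h2
  termination_by γ _ _ => psize γ
  decreasing_by
    all_goals simp only [psize]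
    all_goals omega
theorem closed_BF : ∀ (γ : Prog) (χ₀ ψ : Fml), ψ ∈ BF γ χ₀ → ∀ χ, ClStep ψ χ →
    χ ∈ BF γ χ₀ ∪ clF χ₀
  | .atom a, χ₀, ψ => by
      intro h χ hs
      simp only [BF, Finset.mem_singleton] at h; subst h
      rcases clstep_box_atom hs with rfl
      exact Finset.mem_union_right _ (mem_clF_self _)
  | .conv a, χ₀, ψ => by
      intro h χ hs
      simp only [BF, Finset.mem_singleton] at h; subst h
      rcases clstep_box_conv hs with rfl
      exact Finset.mem_union_right _ (mem_clF_self _)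
  | .seq γ δ, χ₀, ψ => by
      intro h χ hs
      simp only [BF, Finset.mem_insert, Finset.mem_union] at h
      rcases h with rfl | h | h
      · rcases clstep_box_seq hs with rfl
        refine Finset.mem_union_left _ ?_
        simp only [BF]
        exact Finset.mem_insert_of_mem (Finset.mem_union_left _ (mem_BF_self _ _))
      · have h2 := closed_BF γ (.box δ χ₀) ψ h χ hs
        rcases Finset.mem_union.1 h2 with h3 | h3
        · refine Finset.mem_union_left _ ?_
          simp only [BF]
          exact Finset.mem_insert_of_mem (Finset.mem_union_left _ h3)
        · simp only [clF] at h3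
          rcases Finset.mem_union.1 h3 with h4 | h4
          · refine Finset.mem_union_left _ ?_
            simp only [BF]
            exact Finset.mem_insert_of_mem (Finset.mem_union_right _ h4)
          · exact Finset.mem_union_right _ h4
      · have h2 := closed_BF δ χ₀ ψ h χ hs
        rcases Finset.mem_union.1 h2 with h3 | h3
        · refine Finset.mem_union_left _ ?_
          simp only [BF]
          exact Finset.mem_insert_of_mem (Finset.mem_union_right _ h3)
        · exact Finset.mem_union_right _ h3
  | .choice γ δ, χ₀, ψ => by
      intro h χ hs
      simp only [BF, Finset.mem_insert, Finset.mem_union] at h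
      rcases h with rfl | h | h
      · rcases clstep_box_choice hs with rfl | rfl
        · refine Finset.mem_union_left _ ?_
          simp only [BF]
          exact Finset.mem_insert_of_mem (Finset.mem_union_left _ (mem_BF_self _ _))
        · refine Finset.mem_union_left _ ?_
          simp only [BF]
          exact Finset.mem_insert_of_mem (Finset.mem_union_right _ (mem_BF_self _ _))
      · have h2 := closed_BF γ χ₀ ψ h χ hs
        rcases Finset.mem_union.1 h2 with h3 | h3
        · refine Finset.mem_union_left _ ?_
          simp only [BF]
          exact Finset.mem_insert_of_mem (Finset.mem_union_left _ h3)
        · exact Finset.mem_union_right _ h3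
      · have h2 := closed_BF δ χ₀ ψ h χ hs
        rcases Finset.mem_union.1 h2 with h3 | h3
        · refine Finset.mem_union_left _ ?_
          simp only [BF]
          exact Finset.mem_insert_of_mem (Finset.mem_union_right _ h3)
        · exact Finset.mem_union_right _ h3
  | .star γ, χ₀, ψ => by
      intro h χ hs
      simp only [BF, Finset.mem_insert] at h
      rcases h with rfl | h
      · rcases clstep_box_star hs with rfl | rfl
        · exact Finset.mem_union_right _ (mem_clF_self _)
        · refine Finset.mem_union_left _ ?_
          simp only [BF]
          exact Finset.mem_insert_of_mem (mem_BF_self _ _)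
      · have h2 := closed_BF γ (.box (.star γ) χ₀) ψ h χ hs
        rcases Finset.mem_union.1 h2 with h3 | h3
        · refine Finset.mem_union_left _ ?_
          simp only [BF]
          exact Finset.mem_insert_of_mem h3
        · simp only [clF] at h3
          exact h3
  | .test ψ₀, χ₀, ψ => by
      intro h χ hs
      simp only [BF, Finset.mem_insert] at h
      rcases h with rfl | h
      · rcases clstep_box_test hs with rfl | rfl
        · exact Finset.mem_union_right _ (mem_clF_self _)
        · refine Finset.mem_union_left _ ?_
          simp only [BF]
          exact Finset.mem_insert_of_mem (mem_clF_self _)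
      · have h2 := closed_clF (nnfNeg ψ₀) ψ h χ hs
        refine Finset.mem_union_left _ ?_
        simp only [BF]
        exact Finset.mem_insert_of_mem h2
  termination_by γ _ _ => psize γ
  decreasing_by
    all_goals simp only [psize]
    all_goals (try omega)
    all_goals exact lt_of_le_of_lt (fsize_nnfNeg_le _) (by omega)
end

theorem cl_subset_clF (φ : Fml) : Cl φ ⊆ ↑(clF φ) := by
  intro ψ hmem
  have h : Relation.ReflTransGen ClStep φ ψ := hmem
  clear hmem
  induction h with
  | refl => exact mem_clF_self φ
  | tail hsteps hstep ih => exact closed_clF φ _ ih _ hstep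

end ClosureAux

/-- `|cl(φ)| ≤ |φ|`, and every formula in `cl(φ)` has size at most `|φ|²`. -/
theorem closure_card_and_size (φ : Fml) (hφ : IsNNF φ) :
    (Cl φ).Finite ∧ (Cl φ).ncard ≤ fsize φ ∧ ∀ ψ ∈ Cl φ, fsize ψ ≤ (fsize φ) ^ 2 := by
  have hsub : Cl φ ⊆ ↑(clF φ) := cl_subset_clF φ
  have hfin : (Cl φ).Finite := Set.Finite.subset (clF φ).finite_toSet hsub
  refine ⟨hfin, ?_, ?_⟩
  · calc (Cl φ).ncard ≤ (↑(clF φ) : Set Fml).ncard :=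
          Set.ncard_le_ncard hsub (clF φ).finite_toSet
      _ = (clF φ).card := Set.ncard_coe_finset _
      _ ≤ fsize φ := card_clF φ
  · intro ψ h
    exact size_clF φ ψ (hsub h)
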